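/- Let B be a Boolean algebra, S a finite subset of B closed under meet ⊓ and containing ⊤, let □ᵢ, □ⱼ, □ᵢⱼ : B → B all satisfy the modal axioms (m.i) and (m.ii), axiom (m.iv) (□ᵢ x ≤ □ᵢⱼ x and □ⱼ x ≤ □ᵢⱼ x) and (m.indep) (□ᵢⱼ x ≤ □ᵢ x ⊔ □ⱼ x), and let p be a finitely additive probability on B. Then the fused basic belief assignment satisfies, for every φ ∈ S: p(φ^{□ᵢⱼ}) = ∑_{(η,ξ)∈S×S: η⊓ξ = φ} p(η^{□ᵢ} ⊓ ξ^{□ⱼ}). -/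
import Mathlib


open scoped Classical

/-- The basic propositional assignment (bpa) of `φ`:
`φ^□ = □φ ⊓ (⊔_{ψ ∈ S, ψ < φ} □ψ)ᶜ`. -/
noncomputable def bpa {B : Type*} [BooleanAlgebra B]
    (S : Finset B) (box : B → B) (φ : B) : B :=
  box φ ⊓ ((S.filter fun ψ => ψ < φ).sup box)ᶜ

section Aux

variable {B : Type*} [BooleanAlgebra B]

lemma box_mono (box : B → B) (mi : box ⊤ = ⊤)
    (mii : ∀ x y : B, box (xᶜ ⊔ y) ≤ (box x)ᶜ ⊔ box y)
    {x y : B} (h : x ≤ y) : box x ≤ box y := by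
  have hxy : xᶜ ⊔ y = ⊤ := by
    apply le_antisymm le_top
    calc (⊤ : B) = xᶜ ⊔ x := compl_sup_eq_top.symm
    _ ≤ xᶜ ⊔ y := sup_le_sup_left h _
  have h2 : (⊤ : B) ≤ (box x)ᶜ ⊔ box y := by
    calc (⊤ : B) = box (xᶜ ⊔ y) := by rw [hxy, mi]
    _ ≤ (box x)ᶜ ⊔ box y := mii x y
  calc box x = box x ⊓ ((box x)ᶜ ⊔ box y) := by rw [eq_top_iff.2 h2, inf_top_eq]
  _ = (box x ⊓ (box x)ᶜ) ⊔ (box x ⊓ box y) := inf_sup_left _ _ _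
  _ ≤ box y := by simp

lemma box_inf (box : B → B) (mi : box ⊤ = ⊤)
    (mii : ∀ x y : B, box (xᶜ ⊔ y) ≤ (box x)ᶜ ⊔ box y)
    (x y : B) : box x ⊓ box y ≤ box (x ⊓ y) := by
  have hx : x ≤ yᶜ ⊔ (x ⊓ y) := by
    calc x = x ⊓ (yᶜ ⊔ y) := by simp
    _ = (x ⊓ yᶜ) ⊔ (x ⊓ y) := inf_sup_left _ _ _
    _ ≤ yᶜ ⊔ (x ⊓ y) := sup_le_sup inf_le_right le_rfl
  have h1 : box x ≤ (box y)ᶜ ⊔ box (x ⊓ y) :=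
    le_trans (box_mono box mi mii hx) (mii y (x ⊓ y))
  calc box x ⊓ box y ≤ ((box y)ᶜ ⊔ box (x ⊓ y)) ⊓ box y := inf_le_inf_right _ h1
  _ = ((box y)ᶜ ⊓ box y) ⊔ (box (x ⊓ y) ⊓ box y) := inf_sup_right _ _ _
  _ ≤ box (x ⊓ y) := by simp

lemma bpa_le_box (S : Finset B) (box : B → B) (φ : B) : bpa S box φ ≤ box φ :=
  inf_le_left

lemma bpa_disjoint_box_lt (S : Finset B) (box : B → B) {φ ψ : B}
    (hψ : ψ ∈ S) (hlt : ψ < φ) : Disjoint (bpa S box φ) (box ψ) := by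
  have h1 : bpa S box φ ≤ ((S.filter fun χ => χ < φ).sup box)ᶜ := inf_le_right
  have h2 : box ψ ≤ (S.filter fun χ => χ < φ).sup box :=
    Finset.le_sup (by simp [Finset.mem_filter, hψ, hlt])
  exact (le_compl_iff_disjoint_right.1 h1).mono_right h2

lemma bpa_disjoint (S : Finset B)
    (hmeet : ∀ x ∈ S, ∀ y ∈ S, x ⊓ y ∈ S)
    (box : B → B) (mi : box ⊤ = ⊤)
    (mii : ∀ x y : B, box (xᶜ ⊔ y) ≤ (box x)ᶜ ⊔ box y)
    {φ ψ : B} (hφ : φ ∈ S) (hψ : ψ ∈ S) (hne : φ ≠ ψ) :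
    Disjoint (bpa S box φ) (bpa S box ψ) := by
  have hmem : φ ⊓ ψ ∈ S := hmeet φ hφ ψ hψ
  have hb : bpa S box φ ⊓ bpa S box ψ ≤ box (φ ⊓ ψ) :=
    le_trans (inf_le_inf (bpa_le_box S box φ) (bpa_le_box S box ψ))
      (box_inf box mi mii φ ψ)
  rcases eq_or_ne (φ ⊓ ψ) φ with h | h
  · -- φ ≤ ψ, so φ ⊓ ψ < ψ
    have hlt : φ ⊓ ψ < ψ := lt_of_le_of_ne inf_le_right (by
      intro he; exact hne (by rw [← h, he]))
    have := bpa_disjoint_box_lt S box hmem hlt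
    rw [disjoint_iff] at this ⊢
    apply le_antisymm _ bot_le
    calc bpa S box φ ⊓ bpa S box ψ ≤ bpa S box ψ ⊓ box (φ ⊓ ψ) :=
      le_inf inf_le_right hb
    _ = ⊥ := this
  · have hlt : φ ⊓ ψ < φ := lt_of_le_of_ne inf_le_left h
    have := bpa_disjoint_box_lt S box hmem hlt
    rw [disjoint_iff] at this ⊢
    apply le_antisymm _ bot_le
    calc bpa S box φ ⊓ bpa S box ψ ≤ bpa S box φ ⊓ box (φ ⊓ ψ) :=
      le_inf inf_le_left hb
    _ = ⊥ := this

lemma box_le_sup_bpa (S : Finset B) (box : B → B) :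
    ∀ n : ℕ, ∀ φ : B, (S.filter fun ψ => ψ < φ).card ≤ n → φ ∈ S →
      box φ ≤ S.sup (bpa S box) := by
  intro n
  induction n with
  | zero =>
    intro φ hcard hφ
    have : (S.filter fun ψ => ψ < φ) = ∅ := Finset.card_eq_zero.1 (Nat.le_zero.1 hcard)
    have hbpa : bpa S box φ = box φ := by
      rw [bpa, this]; simp
    exact hbpa ▸ Finset.le_sup hφ
  | succ n ih =>
    intro φ hcard hφ
    set c := (S.filter fun ψ => ψ < φ).sup box with hc
    have key : box φ ≤ bpa S box φ ⊔ c := by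
      calc box φ = box φ ⊓ (cᶜ ⊔ c) := by simp
      _ = (box φ ⊓ cᶜ) ⊔ (box φ ⊓ c) := inf_sup_left _ _ _
      _ ≤ bpa S box φ ⊔ c := sup_le_sup le_rfl inf_le_right
    have hsub : c ≤ S.sup (bpa S box) := by
      apply Finset.sup_le
      intro ψ hψ
      rw [Finset.mem_filter] at hψ
      apply ih ψ _ hψ.1
      have hss : (S.filter fun χ => χ < ψ) ⊂ (S.filter fun χ => χ < φ) := by
        constructor
        · intro χ hχ
          rw [Finset.mem_filter] at hχ ⊢
          exact ⟨hχ.1, hχ.2.trans hψ.2⟩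
        · intro hcontra
          have := hcontra (Finset.mem_filter.2 ⟨hψ.1, hψ.2⟩)
          rw [Finset.mem_filter] at this
          exact lt_irrefl ψ this.2
      have := Finset.card_lt_card hss
      omega
    exact le_trans key (sup_le (Finset.le_sup hφ) hsub)

lemma sup_bpa_eq_top (S : Finset B) (htop : ⊤ ∈ S) (box : B → B) (mi : box ⊤ = ⊤) :
    S.sup (bpa S box) = ⊤ := by
  apply le_antisymm le_top
  have := box_le_sup_bpa S box (S.filter fun ψ => ψ < ⊤).card ⊤ le_rfl htop
  rwa [mi] at this

end Aux

/-- The fused basic belief assignment satisfies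
`p(φ^{□ᵢⱼ}) = ∑_{η⊓ξ = φ} p(η^{□ᵢ} ⊓ ξ^{□ⱼ})` for every `φ ∈ S`. -/
theorem fused_bba_eq_sum {B : Type*} [BooleanAlgebra B]
    (S : Finset B)
    (hmeet : ∀ x ∈ S, ∀ y ∈ S, x ⊓ y ∈ S)
    (htop : ⊤ ∈ S)
    (boxI boxJ boxIJ : B → B)
    (miI : boxI ⊤ = ⊤)
    (miiI : ∀ x y : B, boxI (xᶜ ⊔ y) ≤ (boxI x)ᶜ ⊔ boxI y)
    (miJ : boxJ ⊤ = ⊤)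
    (miiJ : ∀ x y : B, boxJ (xᶜ ⊔ y) ≤ (boxJ x)ᶜ ⊔ boxJ y)
    (miIJ : boxIJ ⊤ = ⊤)
    (miiIJ : ∀ x y : B, boxIJ (xᶜ ⊔ y) ≤ (boxIJ x)ᶜ ⊔ boxIJ y)
    (mivI : ∀ x : B, boxI x ≤ boxIJ x)
    (mivJ : ∀ x : B, boxJ x ≤ boxIJ x)
    (mindep : ∀ x : B, boxIJ x ≤ boxI x ⊔ boxJ x)
    (p : B → ℝ)
    (hp0 : ∀ x : B, 0 ≤ p x)
    (hptop : p ⊤ = 1)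
    (hpadd : ∀ x y : B, x ⊓ y = ⊥ → p (x ⊔ y) = p x + p y) :
    ∀ φ ∈ S,
      p (bpa S boxIJ φ) =
        ∑ q ∈ (S ×ˢ S).filter fun q => q.1 ⊓ q.2 = φ,
          p (bpa S boxI q.1 ⊓ bpa S boxJ q.2) := by
  -- p ⊥ = 0
  have hpbot : p ⊥ = 0 := by
    have := hpadd ⊥ ⊥ (by simp)
    simp at this
    linarith
  -- additivity over pairwise disjoint finite sups
  have psum : ∀ (T : Finset (B × B)) (f : B × B → B),
      (∀ a ∈ T, ∀ b ∈ T, a ≠ b → Disjoint (f a) (f b)) →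
      p (T.sup f) = ∑ a ∈ T, p (f a) := by
    intro T f
    induction T using Finset.induction_on with
    | empty => intro _; simpa using hpbot
    | @insert a T ha ih =>
      intro hdisj
      rw [Finset.sup_insert, Finset.sum_insert ha]
      have hd : Disjoint (f a) (T.sup f) := by
        rw [Finset.disjoint_sup_right]
        intro b hb
        exact hdisj a (Finset.mem_insert_self a T) b (Finset.mem_insert_of_mem hb)
          (fun h => ha (h ▸ hb))
      rw [hpadd _ _ (disjoint_iff.1 hd), ih (fun x hx y hy hxy =>
        hdisj x (Finset.mem_insert_of_mem hx) y (Finset.mem_insert_of_mem hy) hxy)]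
  intro φ hφ
  set T := (S ×ˢ S).filter fun q => q.1 ⊓ q.2 = φ with hT
  set g : B × B → B := fun q => bpa S boxI q.1 ⊓ bpa S boxJ q.2 with hg
  -- key element identity
  have key : bpa S boxIJ φ = T.sup g := by
    apply le_antisymm
    · -- ≤ direction
      have htotI := sup_bpa_eq_top S htop boxI miI
      have htotJ := sup_bpa_eq_top S htop boxJ miJ
      have hfull : (S ×ˢ S).sup g = ⊤ := by
        rw [Finset.sup_product_left]
        calc S.sup (fun η => S.sup fun ξ => g (η, ξ))
            = S.sup (fun η => bpa S boxI η ⊓ S.sup (bpa S boxJ)) := by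
              apply Finset.sup_congr rfl
              intro η _
              rw [Finset.sup_inf_distrib_left]
        _ = S.sup (bpa S boxI) := by rw [htotJ]; simp
        _ = ⊤ := htotI
      calc bpa S boxIJ φ = bpa S boxIJ φ ⊓ (S ×ˢ S).sup g := by rw [hfull]; simp
      _ = (S ×ˢ S).sup (fun q => bpa S boxIJ φ ⊓ g q) :=
        Finset.sup_inf_distrib_left _ _ _
      _ ≤ T.sup g := by
        apply Finset.sup_le
        rintro ⟨η, ξ⟩ hq
        rw [Finset.mem_product] at hq
        obtain ⟨hη, hξ⟩ := hq
        by_cases hcase : η ⊓ ξ = φ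
        · exact le_trans inf_le_right
            (Finset.le_sup (Finset.mem_filter.2 ⟨Finset.mem_product.2 ⟨hη, hξ⟩, hcase⟩))
        · -- show the piece is ⊥
          have hζS : η ⊓ ξ ∈ S := hmeet η hη ξ hξ
          have hgbox : g (η, ξ) ≤ boxIJ (η ⊓ ξ) := by
            calc g (η, ξ) ≤ boxI η ⊓ boxJ ξ :=
              inf_le_inf (bpa_le_box S boxI η) (bpa_le_box S boxJ ξ)
            _ ≤ boxIJ η ⊓ boxIJ ξ := inf_le_inf (mivI η) (mivJ ξ)
            _ ≤ boxIJ (η ⊓ ξ) := box_inf boxIJ miIJ miiIJ η ξ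
          by_cases hle : η ⊓ ξ ≤ φ
          · -- η ⊓ ξ < φ : killed by the complement part of bpa_IJ φ
            have hlt : η ⊓ ξ < φ := lt_of_le_of_ne hle hcase
            have hd : Disjoint (bpa S boxIJ φ) (g (η, ξ)) :=
              (bpa_disjoint_box_lt S boxIJ hζS hlt).mono_right hgbox
            calc bpa S boxIJ φ ⊓ g (η, ξ) = ⊥ := disjoint_iff.1 hd
            _ ≤ T.sup g := bot_le
          · -- neither η nor ξ is below φ
            have hηφ : ¬ η ≤ φ := fun h => hle (le_trans inf_le_left h)
            have hξφ : ¬ ξ ≤ φ := fun h => hle (le_trans inf_le_right h)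
            have hltη : η ⊓ φ < η :=
              lt_of_le_of_ne inf_le_left (fun h => hηφ (inf_eq_left.1 h))
            have hltξ : ξ ⊓ φ < ξ :=
              lt_of_le_of_ne inf_le_left (fun h => hξφ (inf_eq_left.1 h))
            have hdIφ : Disjoint (bpa S boxI η) (boxI φ) := by
              rw [disjoint_iff]
              apply le_antisymm _ bot_le
              calc bpa S boxI η ⊓ boxI φ
                  ≤ bpa S boxI η ⊓ boxI (η ⊓ φ) :=
                    le_inf inf_le_left (le_trans
                      (inf_le_inf_right _ (bpa_le_box S boxI η))
                      (box_inf boxI miI miiI η φ))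
              _ = ⊥ := disjoint_iff.1 (bpa_disjoint_box_lt S boxI (hmeet η hη φ hφ) hltη)
            have hdJφ : Disjoint (bpa S boxJ ξ) (boxJ φ) := by
              rw [disjoint_iff]
              apply le_antisymm _ bot_le
              calc bpa S boxJ ξ ⊓ boxJ φ
                  ≤ bpa S boxJ ξ ⊓ boxJ (ξ ⊓ φ) :=
                    le_inf inf_le_left (le_trans
                      (inf_le_inf_right _ (bpa_le_box S boxJ ξ))
                      (box_inf boxJ miJ miiJ ξ φ))
              _ = ⊥ := disjoint_iff.1 (bpa_disjoint_box_lt S boxJ (hmeet ξ hξ φ hφ) hltξ)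
            have hd : bpa S boxIJ φ ⊓ g (η, ξ) = ⊥ := by
              apply le_antisymm _ bot_le
              calc bpa S boxIJ φ ⊓ g (η, ξ)
                  ≤ (boxI φ ⊔ boxJ φ) ⊓ g (η, ξ) :=
                    inf_le_inf_right _ (le_trans (bpa_le_box S boxIJ φ) (mindep φ))
              _ = (boxI φ ⊓ g (η, ξ)) ⊔ (boxJ φ ⊓ g (η, ξ)) := inf_sup_right _ _ _
              _ ≤ ⊥ := by
                apply sup_le
                · calc boxI φ ⊓ g (η, ξ) ≤ boxI φ ⊓ bpa S boxI η :=
                    inf_le_inf_left _ inf_le_left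
                  _ = ⊥ := disjoint_iff.1 hdIφ.symm
                · calc boxJ φ ⊓ g (η, ξ) ≤ boxJ φ ⊓ bpa S boxJ ξ :=
                    inf_le_inf_left _ inf_le_right
                  _ = ⊥ := disjoint_iff.1 hdJφ.symm
            calc bpa S boxIJ φ ⊓ g (η, ξ) = ⊥ := hd
            _ ≤ T.sup g := bot_le
    · -- ≥ direction
      apply Finset.sup_le
      rintro ⟨η, ξ⟩ hq
      rw [hT, Finset.mem_filter, Finset.mem_product] at hq
      obtain ⟨⟨hη, hξ⟩, hmeetq⟩ := hq
      -- g (η,ξ) ≤ boxIJ φ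
      have h1 : g (η, ξ) ≤ boxIJ φ := by
        calc g (η, ξ) ≤ boxI η ⊓ boxJ ξ :=
          inf_le_inf (bpa_le_box S boxI η) (bpa_le_box S boxJ ξ)
        _ ≤ boxIJ η ⊓ boxIJ ξ := inf_le_inf (mivI η) (mivJ ξ)
        _ ≤ boxIJ (η ⊓ ξ) := box_inf boxIJ miIJ miiIJ η ξ
        _ = boxIJ φ := by rw [hmeetq]
      have h2 : g (η, ξ) ≤ ((S.filter fun ψ => ψ < φ).sup boxIJ)ᶜ := by
        rw [le_compl_iff_disjoint_right, Finset.disjoint_sup_right]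
        intro ψ hψ
        rw [Finset.mem_filter] at hψ
        obtain ⟨hψS, hψlt⟩ := hψ
        -- ψ < φ = η ⊓ ξ ≤ η and ψ < η (similarly ξ)
        have hψη : ψ < η := lt_of_lt_of_le hψlt (hmeetq ▸ inf_le_left)
        have hψξ : ψ < ξ := lt_of_lt_of_le hψlt (hmeetq ▸ inf_le_right)
        have hdI : Disjoint (g (η, ξ)) (boxI ψ) :=
          ((bpa_disjoint_box_lt S boxI hψS hψη).mono_left inf_le_left)
        have hdJ : Disjoint (g (η, ξ)) (boxJ ψ) :=
          ((bpa_disjoint_box_lt S boxJ hψS hψξ).mono_left inf_le_right)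
        exact (hdI.sup_right hdJ).mono_right (mindep ψ)
      exact le_inf h1 h2
  rw [key]
  apply psum T g
  rintro ⟨η, ξ⟩ hq ⟨η', ξ'⟩ hq' hne
  rw [hT, Finset.mem_filter, Finset.mem_product] at hq hq'
  obtain ⟨⟨hη, hξ⟩, _⟩ := hq
  obtain ⟨⟨hη', hξ'⟩, _⟩ := hq'
  rcases eq_or_ne η η' with hee | hee
  · have hxe : ξ ≠ ξ' := fun h => hne (by rw [hee, h])
    have := bpa_disjoint S hmeet boxJ miJ miiJ hξ hξ' hxe
    exact (this.mono_left inf_le_right).mono_right inf_le_right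
  · have := bpa_disjoint S hmeet boxI miI miiI hη hη' hee
    exact (this.mono_left inf_le_left).mono_right inf_le_left
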